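/- inf_{ε>0} (V_ε(f,T) + ε) ≤ |f(T)| ≤ inf_{ε>0} (V_ε(f,T) + 2ε), with all quantities in [0,∞]. -/
import Mathlib


open Filter Set
open scoped ENNReal Topology

/-- The approximate (ε-)variation: infimum of Jordan variations of functions of
bounded variation uniformly ε-close to `f` on `T` (⊤ if no such function). -/
noncomputable def approxVar {M : Type*} [MetricSpace M] (f : ℝ → M) (T : Set ℝ) (ε : ℝ) : ℝ≥0∞ :=
  ⨅ (g : ℝ → M) (_ : eVariationOn g T ≠ ⊤ ∧ ∀ t ∈ T, dist (f t) (g t) ≤ ε),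
    eVariationOn g T

/-- The oscillation (diameter of the image) of `f` on `T`, valued in `[0,∞]`. -/
noncomputable def oscOn {M : Type*} [MetricSpace M] (f : ℝ → M) (T : Set ℝ) : ℝ≥0∞ :=
  ⨆ s ∈ T, ⨆ t ∈ T, edist (f s) (f t)

theorem iInf_approxVar_osc_bounds {M : Type*} [MetricSpace M] (f : ℝ → M) (T : Set ℝ)
    (hT : T.Nonempty) :
    (⨅ (ε : ℝ) (_ : 0 < ε), (approxVar f T ε + ENNReal.ofReal ε)) ≤ oscOn f T ∧
    oscOn f T ≤ ⨅ (ε : ℝ) (_ : 0 < ε), (approxVar f T ε + ENNReal.ofReal (2 * ε)) := by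
  obtain ⟨t₀, ht₀⟩ := hT
  constructor
  · rcases eq_or_ne (oscOn f T) ⊤ with htop | hfin
    · simp [htop]
    · refine ENNReal.le_of_forall_pos_le_add fun δ hδ _ => ?_
      set ε : ℝ := (oscOn f T).toReal + δ with hε
      have hεpos : 0 < ε := by positivity
      have hconst : eVariationOn (fun _ : ℝ => f t₀) T = 0 :=
        eVariationOn.constant_on (by
          rintro x ⟨_, _, rfl⟩ y ⟨_, _, rfl⟩; rfl)
      have happ : approxVar f T ε ≤ 0 := by
        refine iInf₂_le_of_le (fun _ => f t₀) ⟨?_, ?_⟩ (le_of_eq hconst)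
        · simp [hconst]
        · intro t ht
          have h1 : edist (f t) (f t₀) ≤ oscOn f T := by
            refine le_trans ?_ (le_iSup₂ (f := fun s (_ : s ∈ T) => ⨆ u ∈ T, edist (f s) (f u)) t ht)
            exact le_iSup₂ (f := fun u (_ : u ∈ T) => edist (f t) (f u)) t₀ ht₀
          have := ENNReal.toReal_mono hfin h1
          rw [← dist_edist] at this
          linarith [this, δ.coe_nonneg]
      calc (⨅ (ε : ℝ) (_ : 0 < ε), (approxVar f T ε + ENNReal.ofReal ε))
          ≤ approxVar f T ε + ENNReal.ofReal ε := biInf_le _ hεpos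
        _ ≤ 0 + ENNReal.ofReal ε := by gcongr
        _ = ENNReal.ofReal ((oscOn f T).toReal + δ) := by rw [zero_add]
        _ ≤ ENNReal.ofReal (oscOn f T).toReal + ENNReal.ofReal δ :=
            ENNReal.ofReal_add_le
        _ = oscOn f T + δ := by
            rw [ENNReal.ofReal_toReal hfin, ENNReal.ofReal_coe_nnreal]
  · refine le_iInf fun ε => le_iInf fun hε => ?_
    rw [approxVar, ENNReal.iInf_add]
    refine le_iInf fun g => ?_
    rw [ENNReal.iInf_add]
    refine le_iInf fun hg => ?_
    rw [oscOn]
    refine iSup₂_le fun s hs => iSup₂_le fun t ht => ?_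
    have hds : edist (f s) (g s) ≤ ENNReal.ofReal ε := by
      rw [edist_dist]; exact ENNReal.ofReal_le_ofReal (hg.2 s hs)
    have hdt : edist (g t) (f t) ≤ ENNReal.ofReal ε := by
      rw [edist_comm, edist_dist]; exact ENNReal.ofReal_le_ofReal (hg.2 t ht)
    calc edist (f s) (f t)
        ≤ edist (f s) (g s) + edist (g s) (g t) + edist (g t) (f t) :=
          edist_triangle4 _ _ _ _
      _ ≤ ENNReal.ofReal ε + eVariationOn g T + ENNReal.ofReal ε := by
          gcongr
          exact eVariationOn.edist_le g hs ht
      _ = eVariationOn g T + ENNReal.ofReal (2 * ε) := by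
          rw [two_mul, ENNReal.ofReal_add hε.le hε.le]; ring
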